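/- arXiv:1902.00068 — 2 statements merged into one kernel-verified Lean document; each statement's English description precedes it below -/
import Mathlib

section
/- Fix κ ∈ (−1/2, 0). For any q ∈ ℝ and any u ∈ C¹(𝒞), the following pointwise inequality holds on 𝒞: y^{q−1} (D_r u)² ≥ (1/4)(2κ + q − 2)² y^{q−3} u² − (n−1)(κ + (q−2)/2) y^{q−2} r^{−1} u² − ∇^β[ (κ + (q−2)/2) y^{q−2} ∇_β y · u² ], where the last term is the (Minkowski) divergence of the spacetime vector field with components (κ + (q−2)/2) y^{q−2} ∇^β y · u². -/
open MeasureTheory Real Filter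

noncomputable section

namespace CarlemanWave

/-- Euclidean space `ℝⁿ`. -/
abbrev Spc (n : ℕ) : Type := EuclideanSpace ℝ (Fin n)

variable {n : ℕ}

/-- The `i`-th standard basis vector. -/
def esingle (n : ℕ) (i : Fin n) : Spc n := EuclideanSpace.single i 1

/-- Time derivative `∂ₜ u`. -/
def pdt (u : ℝ → Spc n → ℝ) (t : ℝ) (x : Spc n) : ℝ := deriv (fun s => u s x) t

/-- Spatial partial derivative `∂ᵢ u`. -/
def pdx (u : ℝ → Spc n → ℝ) (i : Fin n) (t : ℝ) (x : Spc n) : ℝ :=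
  fderiv ℝ (fun z => u t z) x (esingle n i)

/-- Radial derivative `∂ᵣ u`. -/
def pdr (u : ℝ → Spc n → ℝ) (t : ℝ) (x : Spc n) : ℝ :=
  fderiv ℝ (fun z => u t z) x (‖x‖⁻¹ • x)

/-- Spatial Laplacian. -/
def lap (u : ℝ → Spc n → ℝ) (t : ℝ) (x : Spc n) : ℝ :=
  ∑ i, pdx (fun s z => pdx u i s z) i t x

/-- Wave operator `□ = −∂ₜₜ + Δ`. -/
def waveOp (u : ℝ → Spc n → ℝ) (t : ℝ) (x : Spc n) : ℝ :=
  - pdt (fun s z => pdt u s z) t x + lap u t x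

/-- Singular wave operator `□_κ = □ + κ(1−κ)/(1−|x|)²`. -/
def boxKappa (κ : ℝ) (u : ℝ → Spc n → ℝ) (t : ℝ) (x : Spc n) : ℝ :=
  waveOp u t x + κ * (1 - κ) / (1 - ‖x‖)^2 * u t x

/-- Twisted spatial derivative `Dᵢu = ∂ᵢu − (κ/y)∂ᵢy · u`, where `y = 1 − |x|`
and `∂ᵢ y = −xᵢ/r`. -/
def Dx (κ : ℝ) (u : ℝ → Spc n → ℝ) (i : Fin n) (t : ℝ) (x : Spc n) : ℝ :=
  pdx u i t x + (κ / (1 - ‖x‖)) * (x i / ‖x‖) * u t x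

/-- Twisted radial derivative `Dᵣu = ∂ᵣu + (κ/y)u`. -/
def Dr (κ : ℝ) (u : ℝ → Spc n → ℝ) (t : ℝ) (x : Spc n) : ℝ :=
  pdr u t x + (κ / (1 - ‖x‖)) * u t x

/-- Conjugate twisted radial derivative `D̄ᵣu = ∂ᵣu − (κ/y)u`. -/
def Dbr (κ : ℝ) (u : ℝ → Spc n → ℝ) (t : ℝ) (x : Spc n) : ℝ :=
  pdr u t x - (κ / (1 - ‖x‖)) * u t x

/-- Twisted wave operator `□_y = g^{αβ} D̄_α D_β` (Minkowski metric,
Cartesian coordinates). -/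
def boxY (κ : ℝ) (u : ℝ → Spc n → ℝ) (t : ℝ) (x : Spc n) : ℝ :=
  - pdt (fun s z => pdt u s z) t x
    + ∑ i, (pdx (fun s z => Dx κ u i s z) i t x
        - (κ / (1 - ‖x‖)) * (x i / ‖x‖) * Dx κ u i t x)

/-- Squared norm of the spatial gradient. -/
def gradSq (u : ℝ → Spc n → ℝ) (t : ℝ) (x : Spc n) : ℝ := ∑ i, (pdx u i t x)^2

/-- Squared norm of the angular gradient `|∇̸u|²`. -/
def angSq (u : ℝ → Spc n → ℝ) (t : ℝ) (x : Spc n) : ℝ := gradSq u t x - (pdr u t x)^2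

/-- Minkowski contraction `D_β u D^β u`. -/
def DD (κ : ℝ) (u : ℝ → Spc n → ℝ) (t : ℝ) (x : Spc n) : ℝ :=
  -(pdt u t x)^2 + ∑ i, (Dx κ u i t x)^2

/-- The `i`-th Cartesian component of the angular gradient `∇̸u`. -/
def angComp (u : ℝ → Spc n → ℝ) (i : Fin n) (t : ℝ) (x : Spc n) : ℝ :=
  pdx u i t x - (x i / ‖x‖) * pdr u t x

/-- `w_{f,z} = ½(□f + (2κ/y)∇_α y ∇^α f) + z`; here `∇_α y ∇^α f = −∂ᵣ f`. -/
def wfz (κ : ℝ) (f : ℝ → Spc n → ℝ) (z : ℝ) (t : ℝ) (x : Spc n) : ℝ :=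
  (1/2) * (waveOp f t x - (2*κ / (1 - ‖x‖)) * pdr f t x) + z

/-- `𝒜_{f,z} = −½(□w_{f,z} + (2κ/y)∇_α y ∇^α w_{f,z})`. -/
def Afz (κ : ℝ) (f : ℝ → Spc n → ℝ) (z : ℝ) (t : ℝ) (x : Spc n) : ℝ :=
  -(1/2) * (waveOp (wfz κ f z) t x - (2*κ / (1 - ‖x‖)) * pdr (wfz κ f z) t x)

/-- Multiplier `S_{f,z}u = ∇^α f D_α u + w_{f,z} u`. -/
def Sfz (κ : ℝ) (f : ℝ → Spc n → ℝ) (z : ℝ) (u : ℝ → Spc n → ℝ) (t : ℝ) (x : Spc n) : ℝ :=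
  - pdt f t x * pdt u t x + (∑ i, pdx f i t x * Dx κ u i t x) + wfz κ f z t x * u t x

/-- Hessian contraction `∇^{αβ} f D_α u D_β u`. -/
def hessQ (κ : ℝ) (f : ℝ → Spc n → ℝ) (u : ℝ → Spc n → ℝ) (t : ℝ) (x : Spc n) : ℝ :=
  pdt (fun s z => pdt f s z) t x * (pdt u t x)^2
    - 2 * ∑ i, pdt (fun s z => pdx f i s z) t x * pdt u t x * Dx κ u i t x
    + ∑ i, ∑ j, pdx (fun s z => pdx f j s z) i t x * Dx κ u i t x * Dx κ u j t x

/-- The Carleman weight `f = −y^{1+2κ}/(1+2κ) − c t²`. -/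
def fC (κ c : ℝ) (t : ℝ) (x : Spc n) : ℝ :=
  -(1 - ‖x‖) ^ (1 + 2*κ) / (1 + 2*κ) - c * t^2

/-- The weight `f_q = −y^{1+q}/(1+q)`. -/
def fQ (q : ℝ) (_t : ℝ) (x : Spc n) : ℝ := -(1 - ‖x‖) ^ (1 + q) / (1 + q)

/-- Integral over the sphere of radius `ρ` with respect to the
`(n−1)`-dimensional Hausdorff measure. -/
def sphInt {n : ℕ} (ρ : ℝ) (F : Spc n → ℝ) : ℝ :=
  ∫ ω in Metric.sphere (0 : Spc n) ρ, F ω ∂μH[(n : ℝ) - 1]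

/-- Lateral boundary integral over `(−T,T) × {r = ρ}`. -/
def bdryInt {n : ℕ} (T ρ : ℝ) (F : ℝ → Spc n → ℝ) : ℝ :=
  ∫ t in Set.Ioo (-T) T, sphInt ρ (F t)

/-- Integral over the cylinder `(−T,T) × B₁`. -/
def cylInt {n : ℕ} (T : ℝ) (F : ℝ → Spc n → ℝ) : ℝ :=
  ∫ t in Set.Ioo (-T) T, ∫ x in Metric.ball (0 : Spc n) 1, F t x

/-- Integral over `𝒞_ε = (−T,T) × {ε < r < 1−ε}`. -/
def annInt {n : ℕ} (T ε : ℝ) (F : ℝ → Spc n → ℝ) : ℝ :=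
  ∫ t in Set.Ioo (-T) T, ∫ x in {z : Spc n | ε < ‖z‖ ∧ ‖z‖ < 1 - ε}, F t x

/-- Signed lateral boundary integral over `Γ_ε`; the first argument of `F`
records the orientation `s` of the outward normal `ν = s ∂ᵣ` (so `s = 1` on
the outer boundary `r = 1 − ε` and `s = −1` on the inner boundary `r = ε`). -/
def bdrySigned {n : ℕ} (T ε : ℝ) (F : ℝ → ℝ → Spc n → ℝ) : ℝ :=
  bdryInt T (1 - ε) (F 1) + bdryInt T ε (F (-1))

/-- `L²`-limit, as the boundary distance `h ↘ 0`, of a one-parameter family of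
functions on `(−T,T) × 𝕊^{n−1}`. -/
def L2BdryLimit (n : ℕ) (T : ℝ) (g : ℝ → ℝ → Spc n → ℝ) (w : ℝ → Spc n → ℝ) : Prop :=
  Tendsto (fun h : ℝ => bdryInt T 1 (fun t ω => (g h t ω - w t ω)^2))
    (nhdsWithin 0 (Set.Ioi 0)) (nhds 0)

/-- The Dirichlet trace `𝒟_κ u = lim_{r↗1} y^{−κ} u`, in the `L²` sense. -/
def HasDirichletTrace (n : ℕ) (T κ : ℝ) (u w : ℝ → Spc n → ℝ) : Prop :=
  L2BdryLimit n T (fun h t ω => h ^ (-κ) * u t ((1 - h) • ω)) w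

/-- The Neumann trace `𝒩_κ u = lim_{r↗1} y^{2κ} ∂ᵣ(y^{−κ}u)`, in the `L²` sense. -/
def HasNeumannTrace (n : ℕ) (T κ : ℝ) (u N : ℝ → Spc n → ℝ) : Prop :=
  L2BdryLimit n T
    (fun h t ω => h ^ (2*κ) *
      fderiv ℝ (fun z : Spc n => (1 - ‖z‖) ^ (-κ) * u t z) ((1 - h) • ω) ω) N

/-- Square integrability (finiteness) of a function on the lateral boundary
`(−T,T) × 𝕊^{n−1}`. -/
def FiniteOnBdry (n : ℕ) (T : ℝ) (N : ℝ → Spc n → ℝ) : Prop :=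
  (∫⁻ t in Set.Ioo (-T) T,
      ∫⁻ ω in Metric.sphere (0 : Spc n) 1, ENNReal.ofReal ((N t ω)^2) ∂μH[(n : ℝ) - 1]) < ⊤

/-- Boundary admissibility (Definition 2.2): the Neumann trace `N` exists and is
finite, and the two Dirichlet limits `(1−2κ)𝒟_κ(y^{−1+2κ}u) = −𝒩_κ u` and
`𝒟_κ(y^{2κ}∂ₜu) = 0` hold in the `L²` sense. -/
def BoundaryAdmissible (n : ℕ) (T κ : ℝ) (u N : ℝ → Spc n → ℝ) : Prop :=
  HasNeumannTrace n T κ u N ∧ FiniteOnBdry n T N ∧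
  L2BdryLimit n T (fun h t ω => (1 - 2*κ) * (h ^ (κ - 1) * u t ((1 - h) • ω)))
    (fun t ω => -(N t ω)) ∧
  L2BdryLimit n T (fun h t ω => h ^ κ * deriv (fun s => u s ((1 - h) • ω)) t)
    (fun _ _ => 0)

/-- Twisted `H¹` energy density. -/
def E1d (κ : ℝ) (u : ℝ → Spc n → ℝ) (t : ℝ) (x : Spc n) : ℝ :=
  (pdt u t x)^2 + (Dr κ u t x)^2 + angSq u t x + (u t x)^2

/-- Twisted `H¹` energy `E₁[u](τ)`. -/
def E1 (κ : ℝ) (u : ℝ → Spc n → ℝ) (τ : ℝ) : ℝ :=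
  ∫ x in Metric.ball (0 : Spc n) 1, E1d κ u τ x

/-- Conjugate twisted `H¹` energy density (with `D̄ᵣ`). -/
def E1dBar (κ : ℝ) (u : ℝ → Spc n → ℝ) (t : ℝ) (x : Spc n) : ℝ :=
  (pdt u t x)^2 + (Dbr κ u t x)^2 + angSq u t x + (u t x)^2

/-- Twisted `H²` energy density:
`Ē₁[Dᵣu] + E₁[∂ₜu] + E₁[∇̸u] + E₁[u]`. -/
def E2d (κ : ℝ) (u : ℝ → Spc n → ℝ) (t : ℝ) (x : Spc n) : ℝ :=
  E1dBar κ (Dr κ u) t x + E1d κ (fun s z => pdt u s z) t x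
    + (∑ i, E1d κ (angComp u i) t x) + E1d κ u t x

/-- Twisted `H²` energy `E₂[u](τ)`. -/
def E2 (κ : ℝ) (u : ℝ → Spc n → ℝ) (τ : ℝ) : ℝ :=
  ∫ x in Metric.ball (0 : Spc n) 1, E2d κ u τ x

/-- Twisted derivative along a spacetime vector field: `D_X u = X^α D_α u`. -/
def DtwX (κ : ℝ) (X : ℝ × Spc n → ℝ × Spc n) (u : ℝ → Spc n → ℝ) (t : ℝ) (x : Spc n) : ℝ :=
  (X (t, x)).1 * pdt u t x + ∑ i, (X (t, x)).2 i * Dx κ u i t x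

/-- Smoothness on the open cylinder `𝒞 = (−T,T) × B₁`. -/
def SmoothOnCyl (n : ℕ) (T : ℝ) (u : ℝ → Spc n → ℝ) : Prop :=
  ContDiffOn ℝ (⊤ : ℕ∞) (fun p : ℝ × Spc n => u p.1 p.2)
    (Set.Ioo (-T) T ×ˢ Metric.ball (0 : Spc n) 1)

/-- The admissibility conditions on the constant `c` in the Carleman weight. -/
def cAdmissible (n : ℕ) (κ T c : ℝ) : Prop :=
  0 < c ∧ c < 1/5 ∧
    (4 ≤ n → c ≤ 1 / (4 * Real.sqrt 3 * T)) ∧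
    (n = 3 → c ≤ min (1 / (4 * Real.sqrt 15 * T)) (|κ| / 120)) ∧
    (n = 1 → c ≤ 1 / (4 * Real.sqrt 15 * T))


/-- the pointwise Hardy inequality (Proposition 2.1). -/
theorem pointwise_hardy
    (n : ℕ) (κ : ℝ) (hκ1 : -(1/2 : ℝ) < κ) (hκ2 : κ < 0)
    (T : ℝ) (hT : 0 < T) (q : ℝ)
    (u : ℝ → Spc n → ℝ)
    (hu : ContDiffOn ℝ 1 (fun p : ℝ × Spc n => u p.1 p.2)
      (Set.Ioo (-T) T ×ˢ Metric.ball (0 : Spc n) 1)) :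
    ∀ t ∈ Set.Ioo (-T) T, ∀ x : Spc n, ‖x‖ < 1 → x ≠ 0 →
      (1 - ‖x‖) ^ (q - 1) * (Dr κ u t x)^2 ≥
        (1/4) * (2*κ + q - 2)^2 * (1 - ‖x‖) ^ (q - 3) * (u t x)^2
        - ((n : ℝ) - 1) * (κ + (q - 2)/2) * (1 - ‖x‖) ^ (q - 2) * ‖x‖⁻¹ * (u t x)^2
        - (∑ i, fderiv ℝ
            (fun z : Spc n => (κ + (q - 2)/2) * (1 - ‖z‖) ^ (q - 2) * (-(z i / ‖z‖)) * (u t z)^2)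
            x (esingle n i)) := by
  intro t ht x hx1 hx0
  have hr : 0 < ‖x‖ := norm_pos_iff.mpr hx0
  have hy : 0 < 1 - ‖x‖ := by linarith
  have hopen : IsOpen (Set.Ioo (-T) T ×ˢ Metric.ball (0 : Spc n) 1) :=
    isOpen_Ioo.prod Metric.isOpen_ball
  have hmem : (t, x) ∈ Set.Ioo (-T) T ×ˢ Metric.ball (0 : Spc n) 1 :=
    ⟨ht, by simpa [Metric.mem_ball, dist_zero_right] using hx1⟩
  have hdiffp : DifferentiableAt ℝ (fun p : ℝ × Spc n => u p.1 p.2) (t, x) :=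
    (hu.contDiffAt (hopen.mem_nhds hmem)).differentiableAt one_ne_zero
  have hdiff : DifferentiableAt ℝ (fun z : Spc n => u t z) x := by
    have h2 : DifferentiableAt ℝ (fun z : Spc n => ((t, z) : ℝ × Spc n)) x :=
      (differentiableAt_const t).prodMk differentiableAt_id
    exact hdiffp.comp x h2
  have hL : HasFDerivAt (fun z : Spc n => u t z) (fderiv ℝ (fun z : Spc n => u t z) x) x :=
    hdiff.hasFDerivAt
  set L : Spc n →L[ℝ] ℝ := fderiv ℝ (fun z : Spc n => u t z) x with hLdef
  -- derivative of the norm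
  have hN : HasFDerivAt (fun z : Spc n => ‖z‖) ((1 / (2 * ‖x‖)) • (2 • innerSL ℝ x)) x := by
    have hsq : HasFDerivAt (fun z : Spc n => ‖z‖ ^ 2) (2 • innerSL ℝ x) x :=
      (hasStrictFDerivAt_norm_sq x).hasFDerivAt
    have hne : ‖x‖ ^ 2 ≠ 0 := by positivity
    have h := hsq.sqrt hne
    rw [Real.sqrt_sq (norm_nonneg x)] at h
    have heq : (fun z : Spc n => ‖z‖) = fun z : Spc n => Real.sqrt (‖z‖ ^ 2) := by
      funext z; rw [Real.sqrt_sq (norm_nonneg z)]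
    rw [heq]; exact h
  set N' : Spc n →L[ℝ] ℝ := (1 / (2 * ‖x‖)) • (2 • innerSL ℝ x) with hN'def
  have hNi : ∀ i : Fin n, N' (EuclideanSpace.single i (1:ℝ)) = x i / ‖x‖ := by
    intro i
    have h1 : N' (EuclideanSpace.single i (1:ℝ))
        = (1 / (2 * ‖x‖)) * (2 * (inner ℝ x (EuclideanSpace.single i (1:ℝ)) : ℝ)) := by
      simp [hN'def]
    rw [h1, EuclideanSpace.inner_single_right]
    simp only [starRingEnd_apply, star_trivial, one_mul]
    field_simp
  -- per-coordinate divergence computation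
  have hfi : ∀ i : Fin n,
      fderiv ℝ
        (fun z : Spc n => (κ + (q - 2)/2) * (1 - ‖z‖) ^ (q - 2) * (-(z i / ‖z‖)) * (u t z)^2)
        x (esingle n i)
      = ((κ + (q - 2)/2) * ((q - 2) * (1 - ‖x‖) ^ (q - 3) * (u t x)^2 / ‖x‖^2
            + (1 - ‖x‖) ^ (q - 3) * (1 - ‖x‖) * (u t x)^2 / ‖x‖^3)) * (x i)^2
        + (-(κ + (q - 2)/2) * (1 - ‖x‖) ^ (q - 3) * (1 - ‖x‖) * (u t x)^2 / ‖x‖)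
        + (-2 * (κ + (q - 2)/2) * (1 - ‖x‖) ^ (q - 3) * (1 - ‖x‖) * (u t x) / ‖x‖)
            * (x i * L (esingle n i)) := by
    intro i
    have hy1 : HasFDerivAt (fun z : Spc n => 1 - ‖z‖) (-N') x := hN.const_sub 1
    have hg : HasFDerivAt (fun z : Spc n => (1 - ‖z‖) ^ (q - 2))
        (((q - 2) * (1 - ‖x‖) ^ (q - 2 - 1)) • (-N')) x := hy1.rpow_const (Or.inl hy.ne')
    have hA1 := hg.const_mul (κ + (q - 2)/2)
    have hproj : HasFDerivAt (fun z : Spc n => z i)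
        (EuclideanSpace.proj i : Spc n →L[ℝ] ℝ) x :=
      (EuclideanSpace.proj i : Spc n →L[ℝ] ℝ).hasFDerivAt (x := x)
    have hinv : HasFDerivAt (fun z : Spc n => ‖z‖⁻¹) ((-(‖x‖ ^ 2)⁻¹) • N') x :=
      (hasDerivAt_inv hr.ne').comp_hasFDerivAt x hN
    have hB := (hproj.mul hinv).neg
    have hW := (hasDerivAt_pow 2 (u t x)).comp_hasFDerivAt x hL
    have hF := (hA1.mul hB).mul hW
    have hfd :
        fderiv ℝ
          (fun z : Spc n =>
            (κ + (q - 2)/2) * (1 - ‖z‖) ^ (q - 2) * (-(z i / ‖z‖)) * (u t z)^2) x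
        = _ := hF.fderiv
    rw [hfd]
    simp only [ContinuousLinearMap.add_apply, ContinuousLinearMap.coe_smul', Pi.smul_apply,
      ContinuousLinearMap.neg_apply, ContinuousLinearMap.smul_apply, smul_eq_mul,
      esingle, hNi i, PiLp.proj_apply, EuclideanSpace.single_apply, if_pos rfl,
      Nat.cast_ofNat, pow_one, Pi.mul_apply, Pi.neg_apply, Function.comp_apply, if_true,
      Nat.succ_sub_one]
    rw [show q - 2 - 1 = q - 3 by ring,
      show (1 - ‖x‖) ^ (q - 2) = (1 - ‖x‖) ^ (q - 3) * (1 - ‖x‖) by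
        rw [show q - 2 = (q - 3) + 1 by ring, Real.rpow_add hy, Real.rpow_one]]
    field_simp
    ring
  -- sums
  have hsum1 : ∑ i, (x i)^2 = ‖x‖^2 := by
    have h1 : (inner ℝ x x : ℝ) = ‖x‖ ^ 2 := real_inner_self_eq_norm_sq x
    rw [PiLp.inner_apply] at h1
    simp only [RCLike.inner_apply, starRingEnd_apply, star_trivial] at h1
    calc ∑ i, (x i)^2 = ∑ i, x i * x i := by simp [sq]
      _ = ‖x‖ ^ 2 := h1
  have hxs : x = ∑ i, x i • esingle n i := by
    ext j
    have h2 : (∑ i, x i • esingle n i) j = ∑ i, x i * (if j = i then (1:ℝ) else 0) := by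
      rw [WithLp.ofLp_sum, Finset.sum_apply]
      refine Finset.sum_congr rfl fun i _ => ?_
      simp [esingle, EuclideanSpace.single_apply]
    rw [h2]
    simp
  have hLx : L x = ∑ i, x i * L (esingle n i) := by
    conv_lhs => rw [hxs]
    rw [map_sum]
    simp [smul_eq_mul]
  have hpdr : pdr u t x = ‖x‖⁻¹ * L x := by
    show L (‖x‖⁻¹ • x) = ‖x‖⁻¹ * L x
    rw [_root_.map_smul, smul_eq_mul]
  have hsum2 : ∑ i, x i * L (esingle n i) = ‖x‖ * pdr u t x := by
    rw [hpdr, ← hLx, ← mul_assoc, mul_inv_cancel₀ hr.ne', one_mul]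
  have hS : (∑ i, fderiv ℝ
        (fun z : Spc n => (κ + (q - 2)/2) * (1 - ‖z‖) ^ (q - 2) * (-(z i / ‖z‖)) * (u t z)^2)
        x (esingle n i))
      = ((κ + (q - 2)/2) * ((q - 2) * (1 - ‖x‖) ^ (q - 3) * (u t x)^2 / ‖x‖^2
            + (1 - ‖x‖) ^ (q - 3) * (1 - ‖x‖) * (u t x)^2 / ‖x‖^3)) * ‖x‖^2
        + (n : ℝ) * (-(κ + (q - 2)/2) * (1 - ‖x‖) ^ (q - 3) * (1 - ‖x‖) * (u t x)^2 / ‖x‖)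
        + (-2 * (κ + (q - 2)/2) * (1 - ‖x‖) ^ (q - 3) * (1 - ‖x‖) * (u t x) / ‖x‖)
            * (‖x‖ * pdr u t x) := by
    rw [Finset.sum_congr rfl fun i _ => hfi i]
    rw [Finset.sum_add_distrib, Finset.sum_add_distrib, ← Finset.mul_sum, ← Finset.mul_sum,
      hsum1, hsum2, Finset.sum_const, Finset.card_univ, Fintype.card_fin, nsmul_eq_mul]
  rw [ge_iff_le, hS]
  have hDr : Dr κ u t x = pdr u t x + κ / (1 - ‖x‖) * u t x := rfl
  rw [hDr,
    show (1 - ‖x‖) ^ (q - 1) = (1 - ‖x‖) ^ (q - 3) * (1 - ‖x‖)^2 by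
      rw [show q - 1 = (q - 3) + 2 by ring, Real.rpow_add hy, Real.rpow_two],
    show (1 - ‖x‖) ^ (q - 2) = (1 - ‖x‖) ^ (q - 3) * (1 - ‖x‖) by
      rw [show q - 2 = (q - 3) + 1 by ring, Real.rpow_add hy, Real.rpow_one]]
  rw [← sub_nonneg]
  have hA0 : (0:ℝ) ≤ (1 - ‖x‖) ^ (q - 3) := Real.rpow_nonneg (le_of_lt hy) _
  have heq :
      (1 - ‖x‖) ^ (q - 3) * (1 - ‖x‖) ^ 2 * (pdr u t x + κ / (1 - ‖x‖) * u t x) ^ 2 -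
        (1 / 4 * (2 * κ + q - 2) ^ 2 * (1 - ‖x‖) ^ (q - 3) * u t x ^ 2 -
            ((n:ℝ) - 1) * (κ + (q - 2) / 2) * ((1 - ‖x‖) ^ (q - 3) * (1 - ‖x‖)) * ‖x‖⁻¹ * u t x ^ 2 -
          ((κ + (q - 2) / 2) *
                  ((q - 2) * (1 - ‖x‖) ^ (q - 3) * u t x ^ 2 / ‖x‖ ^ 2 +
                    (1 - ‖x‖) ^ (q - 3) * (1 - ‖x‖) * u t x ^ 2 / ‖x‖ ^ 3) *
                ‖x‖ ^ 2 +
              (n:ℝ) * (-(κ + (q - 2) / 2) * (1 - ‖x‖) ^ (q - 3) * (1 - ‖x‖) * u t x ^ 2 / ‖x‖) +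
            -2 * (κ + (q - 2) / 2) * (1 - ‖x‖) ^ (q - 3) * (1 - ‖x‖) * u t x / ‖x‖ * (‖x‖ * pdr u t x)))
      = (1 - ‖x‖) ^ (q - 3) * ((1 - ‖x‖) * pdr u t x - (q - 2) / 2 * u t x) ^ 2 := by
    field_simp
    ring
  rw [heq]
  positivity

end CarlemanWave
end
end

section
/- Fix κ ∈ (−1/2, 0) and c > 0, and let f = −y^{1+2κ}/(1+2κ) − c t², z = −4c on the region {0 < r < 1} of ℝ^{1+n}. Then w_{f,z} and 𝒜_{f,z} satisfy the pointwise identities: w_{f,z} = −2κ y^{2κ−1} + (1/2)(n−1) y^{2κ} r^{−1} − 3c, and 𝒜_{f,z} = 2κ(2κ−1)² y^{2κ−3} − (1/2)(n−1)κ(8κ−3) y^{2κ−2} r^{−1} + (1/2)(n−1)(n−4)κ y^{2κ−1} r^{−2} + (1/4)(n−1)(n−3) y^{2κ} r^{−3}. -/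
open MeasureTheory Real Filter

noncomputable section

namespace CarlemanWave

variable {n : ℕ}

section AuxCarleman

lemma sum_coord_sq (x : Spc n) : ∑ i, x i * x i = ‖x‖ ^ 2 := by
  rw [EuclideanSpace.norm_eq, Real.sq_sqrt (Finset.sum_nonneg fun i _ => by positivity)]
  refine Finset.sum_congr rfl fun i _ => ?_
  rw [Real.norm_eq_abs, sq_abs, sq]

lemma innerSL_esingle (x : Spc n) (i : Fin n) : innerSL ℝ x (esingle n i) = x i := by
  simp [esingle, innerSL_apply_apply, EuclideanSpace.inner_single_right]

lemma innerSL_self_dir (x : Spc n) : innerSL ℝ x (‖x‖⁻¹ • x) = ‖x‖⁻¹ * ‖x‖^2 := by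
  rw [innerSL_apply_apply, real_inner_smul_right, real_inner_self_eq_norm_sq]

lemma hasFDerivAt_norm_eu (x : Spc n) (hx : x ≠ 0) :
    HasFDerivAt (fun z : Spc n => ‖z‖) (‖x‖⁻¹ • innerSL ℝ x) x := by
  have hx' : ‖x‖ ≠ 0 := norm_ne_zero_iff.2 hx
  have h1 : HasFDerivAt (fun z : Spc n => ‖z‖ ^ 2) (2 • (innerSL ℝ x)) x :=
    (hasStrictFDerivAt_norm_sq x).hasFDerivAt
  have h2 : HasDerivAt Real.sqrt (1 / (2 * Real.sqrt (‖x‖ ^ 2))) (‖x‖ ^ 2) :=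
    Real.hasDerivAt_sqrt (pow_ne_zero 2 hx')
  have h3 := h2.comp_hasFDerivAt x h1
  have h4 : (Real.sqrt ∘ fun z : Spc n => ‖z‖ ^ 2) = fun z : Spc n => ‖z‖ := by
    funext z; simp [Function.comp, Real.sqrt_sq (norm_nonneg z)]
  rw [h4] at h3
  refine h3.congr_fderiv ?_
  rw [Real.sqrt_sq (norm_nonneg x)]
  ext v
  simp [smul_smul, two_smul]
  field_simp
  ring

lemma hasFDerivAt_radial (φ : ℝ → ℝ) (p : ℝ) (x : Spc n) (hx : x ≠ 0)
    (hφ : HasDerivAt φ p ‖x‖) :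
    HasFDerivAt (fun z : Spc n => φ ‖z‖) ((p * ‖x‖⁻¹) • innerSL ℝ x) x := by
  have h := hφ.comp_hasFDerivAt x (hasFDerivAt_norm_eu x hx)
  rw [smul_smul] at h
  exact h


lemma pdx_radial (φ : ℝ → ℝ) (p : ℝ) (t : ℝ) (x : Spc n) (hx : x ≠ 0) (i : Fin n)
    (hφ : HasDerivAt φ p ‖x‖) :
    pdx (fun _ z => φ ‖z‖) i t x = p * ‖x‖⁻¹ * x i := by
  rw [pdx, (hasFDerivAt_radial φ p x hx hφ).fderiv]
  rw [ContinuousLinearMap.smul_apply, innerSL_esingle, smul_eq_mul]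

lemma pdr_radial (φ : ℝ → ℝ) (p : ℝ) (t : ℝ) (x : Spc n) (hx : x ≠ 0)
    (hφ : HasDerivAt φ p ‖x‖) :
    pdr (fun _ z => φ ‖z‖) t x = p := by
  have hx' : ‖x‖ ≠ 0 := norm_ne_zero_iff.2 hx
  rw [pdr, (hasFDerivAt_radial φ p x hx hφ).fderiv]
  rw [ContinuousLinearMap.smul_apply, innerSL_self_dir, smul_eq_mul]
  rw [sq]
  field_simp

lemma isOpen_regionU : IsOpen {z : Spc n | 0 < ‖z‖ ∧ ‖z‖ < 1} := by
  have : {z : Spc n | 0 < ‖z‖ ∧ ‖z‖ < 1}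
      = {z : Spc n | 0 < ‖z‖} ∩ {z : Spc n | ‖z‖ < 1} := rfl
  rw [this]
  exact (isOpen_lt continuous_const continuous_norm).inter
    (isOpen_lt continuous_norm continuous_const)

lemma lap_radial (φ dφ d2φ : ℝ → ℝ)
    (hφ : ∀ s : ℝ, 0 < s → s < 1 → HasDerivAt φ (dφ s) s)
    (hdφ : ∀ s : ℝ, 0 < s → s < 1 → HasDerivAt dφ (d2φ s) s)
    (t : ℝ) (x : Spc n) (hx0 : 0 < ‖x‖) (hx1 : ‖x‖ < 1) :
    lap (fun _ z => φ ‖z‖) t x = d2φ ‖x‖ + ((n:ℝ) - 1) / ‖x‖ * dφ ‖x‖ := by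
  have hxne : x ≠ 0 := norm_pos_iff.1 hx0
  have hrne : ‖x‖ ≠ 0 := ne_of_gt hx0
  have key : ∀ i : Fin n, pdx (fun s z => pdx (fun _ z' => φ ‖z'‖) i s z) i t x
      = (d2φ ‖x‖ * ‖x‖⁻¹ * ‖x‖⁻¹ + dφ ‖x‖ * (-(‖x‖^2)⁻¹ * ‖x‖⁻¹)) * (x i * x i)
        + dφ ‖x‖ * ‖x‖⁻¹ := by
    intro i
    have h1 : HasFDerivAt (fun z : Spc n => dφ ‖z‖)
        ((d2φ ‖x‖ * ‖x‖⁻¹) • innerSL ℝ x) x :=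
      hasFDerivAt_radial _ _ x hxne (hdφ _ hx0 hx1)
    have h2 : HasFDerivAt (fun z : Spc n => ‖z‖⁻¹)
        ((-(‖x‖^2)⁻¹ * ‖x‖⁻¹) • innerSL ℝ x) x :=
      hasFDerivAt_radial _ _ x hxne (hasDerivAt_inv hrne)
    have h3 : HasFDerivAt (fun z : Spc n => z i)
        (EuclideanSpace.proj i : Spc n →L[ℝ] ℝ) x :=
      ((EuclideanSpace.proj i : Spc n →L[ℝ] ℝ).hasFDerivAt (x := x)).congr_of_eventuallyEq
        (by filter_upwards with z; simp)
    have hF := h1.mul (h2.mul h3)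
    have hFd : fderiv ℝ (fun z : Spc n => dφ ‖z‖ * (‖z‖⁻¹ * z i)) x = _ := hF.fderiv
    have hev : (fun z : Spc n => pdx (fun _ z' => φ ‖z'‖) i t z)
        =ᶠ[nhds x] (fun z : Spc n => dφ ‖z‖ * (‖z‖⁻¹ * z i)) := by
      filter_upwards [isOpen_regionU.mem_nhds (⟨hx0, hx1⟩ :
        x ∈ {z : Spc n | 0 < ‖z‖ ∧ ‖z‖ < 1})] with z hz
      rw [pdx_radial φ (dφ ‖z‖) t z (norm_pos_iff.1 hz.1) i (hφ _ hz.1 hz.2)]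
      ring
    have : pdx (fun s z => pdx (fun _ z' => φ ‖z'‖) i s z) i t x
        = fderiv ℝ (fun z : Spc n => pdx (fun _ z' => φ ‖z'‖) i t z) x (esingle n i) := rfl
    rw [this, hev.fderiv_eq, hFd]
    simp only [ContinuousLinearMap.add_apply, ContinuousLinearMap.smul_apply,
      innerSL_esingle, PiLp.proj_apply, smul_eq_mul, Pi.mul_apply]
    have he : (esingle n i) i = 1 := by simp [esingle]
    rw [he]
    ring
  rw [lap]
  rw [Finset.sum_congr rfl fun i _ => key i]
  rw [Finset.sum_add_distrib, ← Finset.mul_sum, sum_coord_sq, Finset.sum_const,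
    Finset.card_univ, Fintype.card_fin, nsmul_eq_mul]
  field_simp
  ring

lemma lap_congr_on (v v' : Spc n → ℝ) (U : Set (Spc n)) (hU : IsOpen U)
    (h : ∀ z ∈ U, v z = v' z) (t : ℝ) (x : Spc n) (hx : x ∈ U) :
    lap (fun _ z => v z) t x = lap (fun _ z => v' z) t x := by
  have h1 : ∀ z ∈ U, fderiv ℝ v z = fderiv ℝ v' z := fun z hz =>
    Filter.EventuallyEq.fderiv_eq
      (Filter.eventuallyEq_of_mem (hU.mem_nhds hz) fun w hw => h w hw)
  simp only [lap, pdx]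
  refine Finset.sum_congr rfl fun i _ => ?_
  have h2 : (fun z : Spc n => fderiv ℝ (fun z' => v z') z (esingle n i))
      =ᶠ[nhds x] (fun z : Spc n => fderiv ℝ (fun z' => v' z') z (esingle n i)) := by
    filter_upwards [hU.mem_nhds hx] with z hz
    rw [show (fderiv ℝ (fun z' => v z') z) = fderiv ℝ (fun z' => v' z') z from h1 z hz]
  rw [h2.fderiv_eq]

lemma pdr_congr_on (v v' : Spc n → ℝ) (U : Set (Spc n)) (hU : IsOpen U)
    (h : ∀ z ∈ U, v z = v' z) (t : ℝ) (x : Spc n) (hx : x ∈ U) :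
    pdr (fun _ z => v z) t x = pdr (fun _ z => v' z) t x := by
  simp only [pdr]
  rw [Filter.EventuallyEq.fderiv_eq
    (Filter.eventuallyEq_of_mem (hU.mem_nhds hx) fun w hw => h w hw)]

lemma lap_of_t_indep (u : ℝ → Spc n → ℝ) (v : Spc n → ℝ) (h : ∀ s z, u s z = v z)
    (t : ℝ) (x : Spc n) : lap u t x = lap (fun _ z => v z) t x := by
  have hfun : ∀ s : ℝ, (fun z' => u s z') = v := fun s => funext fun z' => h s z'
  simp only [lap, pdx]
  refine Finset.sum_congr rfl fun i _ => ?_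
  have : (fun z : Spc n => fderiv ℝ (fun z' => u t z') z (esingle n i))
      = (fun z : Spc n => fderiv ℝ (fun z' => v z') z (esingle n i)) := by
    funext z; rw [hfun t]
  rw [this]

lemma pdr_of_t_indep (u : ℝ → Spc n → ℝ) (v : Spc n → ℝ) (h : ∀ s z, u s z = v z)
    (t : ℝ) (x : Spc n) : pdr u t x = pdr (fun _ z => v z) t x := by
  simp only [pdr]
  rw [show (fun z' => u t z') = v from funext fun z' => h t z']

lemma hasDerivAt_one_sub_rpow (a s : ℝ) (hs : s < 1) :
    HasDerivAt (fun u : ℝ => (1-u)^a) (-(a * (1-s)^(a-1))) s := by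
  have h1 : HasDerivAt (fun u : ℝ => (1:ℝ) - u) (-1) s := (hasDerivAt_id s).const_sub 1
  have h2 : HasDerivAt (fun u : ℝ => u ^ a) (a * (1-s)^(a-1)) (1-s) :=
    Real.hasDerivAt_rpow_const (Or.inl (by linarith))
  have h3 := h2.comp s h1
  refine h3.congr_deriv ?_
  ring

def phiF (κ : ℝ) : ℝ → ℝ := fun s => -(1-s) ^ (1+2*κ) / (1+2*κ)

lemma hasDerivAt_phiF (κ : ℝ) (hκ : 1 + 2*κ ≠ 0) (s : ℝ) (hs : s < 1) :
    HasDerivAt (phiF κ) ((1-s)^(2*κ)) s := by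
  have h := ((hasDerivAt_one_sub_rpow (1+2*κ) s hs).neg).div_const (1+2*κ)
  have he : (1+2*κ-1 : ℝ) = 2*κ := by ring
  rw [he] at h
  refine h.congr_deriv ?_
  field_simp

lemma hasDerivAt_dphiF (κ : ℝ) (s : ℝ) (hs : s < 1) :
    HasDerivAt (fun u : ℝ => (1-u)^(2*κ)) (-(2*κ*(1-s)^(2*κ-1))) s := by
  exact hasDerivAt_one_sub_rpow (2*κ) s hs

lemma pdx_fC_eq (κ c : ℝ) (i : Fin n) (s : ℝ) (z : Spc n) :
    pdx (fC κ c) i s z = pdx (fun (_ : ℝ) (z' : Spc n) => phiF κ ‖z'‖) i s z := by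
  simp only [pdx, fC, phiF]
  rw [fderiv_sub_const]

lemma pdr_fC_eq (κ c : ℝ) (s : ℝ) (z : Spc n) :
    pdr (fC κ c) s z = pdr (fun (_ : ℝ) (z' : Spc n) => phiF κ ‖z'‖) s z := by
  simp only [pdr, fC, phiF]
  rw [fderiv_sub_const]

lemma lap_fC_eq (κ c : ℝ) (t : ℝ) (x : Spc n) :
    lap (fC κ c) t x = lap (fun (_ : ℝ) (z' : Spc n) => phiF κ ‖z'‖) t x := by
  simp only [lap]
  refine Finset.sum_congr rfl fun i _ => ?_
  have : (fun s (z : Spc n) => pdx (fC κ c) i s z)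
      = (fun s (z : Spc n) => pdx (fun (_ : ℝ) (z' : Spc n) => phiF κ ‖z'‖) i s z) := by
    funext s z; exact pdx_fC_eq κ c i s z
  rw [this]

lemma pdt_fC (κ c t : ℝ) (x : Spc n) : pdt (fC κ c) t x = -(2*c*t) := by
  have h : HasDerivAt (fun s : ℝ => -(1 - ‖x‖)^(1+2*κ)/(1+2*κ) - c * s^2)
      (-(2*c*t)) t := by
    have h0 := ((hasDerivAt_pow 2 t).const_mul c).const_sub
      (-(1 - ‖x‖)^(1+2*κ)/(1+2*κ))
    refine h0.congr_deriv ?_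
    push_cast
    ring
  exact h.deriv

lemma pdt_pdt_fC (κ c t : ℝ) (x : Spc n) :
    pdt (fun s z => pdt (fC κ c) s z) t x = -(2*c) := by
  have h1 : (fun s => pdt (fC κ c) s x) = fun s => -(2*c*s) :=
    funext fun s => pdt_fC κ c s x
  show deriv (fun s => pdt (fC κ c) s x) t = -(2*c)
  rw [h1]
  have h : HasDerivAt (fun s : ℝ => -(2*c*s)) (-(2*c)) t := by
    exact ((hasDerivAt_id t).const_mul (2*c)).neg.congr_deriv (by ring)
  exact h.deriv

lemma wfz_fC (κ c Z t : ℝ) (x : Spc n) :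
    wfz κ (fC κ c) Z t x
      = (1/2) * ((2*c + lap (fun (_ : ℝ) (z' : Spc n) => phiF κ ‖z'‖) 0 x)
          - (2*κ / (1 - ‖x‖)) * pdr (fun (_ : ℝ) (z' : Spc n) => phiF κ ‖z'‖) 0 x) + Z := by
  simp only [wfz, waveOp]
  rw [pdt_pdt_fC, lap_fC_eq, pdr_fC_eq]
  rw [show lap (fun (_ : ℝ) (z' : Spc n) => phiF κ ‖z'‖) t x
      = lap (fun (_ : ℝ) (z' : Spc n) => phiF κ ‖z'‖) 0 x from rfl,
    show pdr (fun (_ : ℝ) (z' : Spc n) => phiF κ ‖z'‖) t x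
      = pdr (fun (_ : ℝ) (z' : Spc n) => phiF κ ‖z'‖) 0 x from rfl]
  ring

def psiW (n : ℕ) (κ c : ℝ) : ℝ → ℝ := fun s =>
  -(2*κ) * (1-s)^(2*κ-1) + (1/2)*((n:ℝ)-1) * ((1-s)^(2*κ) / s) - 3*c

def dpsiW (n : ℕ) (κ : ℝ) : ℝ → ℝ := fun s =>
  2*κ*(2*κ-1) * (1-s)^(2*κ-2) - ((n:ℝ)-1)*κ * ((1-s)^(2*κ-1) / s)
    - (1/2)*((n:ℝ)-1) * ((1-s)^(2*κ) / s^2)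

def d2psiW (n : ℕ) (κ : ℝ) : ℝ → ℝ := fun s =>
  -(2*κ*(2*κ-1)*(2*κ-2)) * (1-s)^(2*κ-3) + ((n:ℝ)-1)*κ*(2*κ-1) * ((1-s)^(2*κ-2) / s)
    + 2*((n:ℝ)-1)*κ * ((1-s)^(2*κ-1) / s^2) + ((n:ℝ)-1) * ((1-s)^(2*κ) / s^3)

lemma hasDerivAt_psiW (n : ℕ) (κ c s : ℝ) (hs0 : 0 < s) (hs1 : s < 1) :
    HasDerivAt (psiW n κ c) (dpsiW n κ s) s := by
  have hy : (0:ℝ) < 1 - s := by linarith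
  have t1 := (hasDerivAt_one_sub_rpow (2*κ-1) s hs1).const_mul (-(2*κ))
  have t2 := ((hasDerivAt_one_sub_rpow (2*κ) s hs1).div (hasDerivAt_id' (x := s))
    (ne_of_gt hs0)).const_mul ((1/2)*((n:ℝ)-1))
  have h := (t1.add t2).sub_const (3*c)
  refine h.congr_deriv ?_
  simp only [dpsiW]
  rw [show (2*κ-1-1 : ℝ) = 2*κ-2 by ring]
  field_simp
  ring

lemma hasDerivAt_dpsiW (n : ℕ) (κ s : ℝ) (hs0 : 0 < s) (hs1 : s < 1) :
    HasDerivAt (dpsiW n κ) (d2psiW n κ s) s := by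
  have t1 := (hasDerivAt_one_sub_rpow (2*κ-2) s hs1).const_mul (2*κ*(2*κ-1))
  have t2 := ((hasDerivAt_one_sub_rpow (2*κ-1) s hs1).div (hasDerivAt_id' (x := s))
    (ne_of_gt hs0)).const_mul (((n:ℝ)-1)*κ)
  have t3 := ((hasDerivAt_one_sub_rpow (2*κ) s hs1).div (hasDerivAt_pow 2 s)
    (pow_ne_zero 2 (ne_of_gt hs0))).const_mul ((1/2)*((n:ℝ)-1))
  have h := (t1.sub t2).sub t3
  refine h.congr_deriv ?_
  simp only [d2psiW]
  rw [show (2*κ-2-1 : ℝ) = 2*κ-3 by ring, show (2*κ-1-1 : ℝ) = 2*κ-2 by ring]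
  push_cast
  field_simp
  ring

lemma wfz_eq_psiW (n : ℕ) (κ c : ℝ) (hκ : 1 + 2*κ ≠ 0) (t : ℝ) (x : Spc n)
    (hx0 : 0 < ‖x‖) (hx1 : ‖x‖ < 1) :
    wfz κ (fC κ c) (-(4*c)) t x = psiW n κ c ‖x‖ := by
  have hy : (0:ℝ) < 1 - ‖x‖ := by linarith
  rw [wfz_fC]
  rw [lap_radial (phiF κ) (fun s => (1-s)^(2*κ)) (fun s => -(2*κ*(1-s)^(2*κ-1)))
    (fun s _ h1 => hasDerivAt_phiF κ hκ s h1) (fun s _ h1 => hasDerivAt_dphiF κ s h1)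
    0 x hx0 hx1]
  rw [pdr_radial (phiF κ) ((1-‖x‖)^(2*κ)) 0 x (norm_pos_iff.1 hx0)
    (hasDerivAt_phiF κ hκ ‖x‖ hx1)]
  simp only [psiW]
  rw [show (2*κ : ℝ) = (2*κ-1)+1 by ring, Real.rpow_add_one (ne_of_gt hy)]
  field_simp
  ring

lemma wfz_t_indep (κ c Z : ℝ) (s s' : ℝ) (z : Spc n) :
    wfz κ (fC κ c) Z s z = wfz κ (fC κ c) Z s' z := by
  rw [wfz_fC, wfz_fC]

lemma pdt_wfz (κ c Z t : ℝ) (x : Spc n) : pdt (wfz κ (fC κ c) Z) t x = 0 := by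
  show deriv (fun s => wfz κ (fC κ c) Z s x) t = 0
  rw [show (fun s => wfz κ (fC κ c) Z s x) = fun _ => wfz κ (fC κ c) Z 0 x from
    funext fun s => wfz_t_indep κ c Z s 0 x]
  exact deriv_const t _

lemma pdtpdt_wfz (κ c Z t : ℝ) (x : Spc n) :
    pdt (fun s z => pdt (wfz κ (fC κ c) Z) s z) t x = 0 := by
  show deriv (fun s => pdt (wfz κ (fC κ c) Z) s x) t = 0
  rw [show (fun s => pdt (wfz κ (fC κ c) Z) s x) = fun _ => (0:ℝ) from
    funext fun s => pdt_wfz κ c Z s x]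
  exact deriv_const t _


end AuxCarleman

/-- the identities for `w_{f,z}` and `𝒜_{f,z}` (Proposition 3.2). -/
theorem wfz_Afz_of_carleman_weight
    (n : ℕ) (κ : ℝ) (hκ1 : -(1/2 : ℝ) < κ) (hκ2 : κ < 0)
    (c : ℝ) (hc : 0 < c) :
    ∀ (t : ℝ) (x : Spc n), 0 < ‖x‖ → ‖x‖ < 1 →
      (wfz κ (fC κ c) (-(4*c)) t x
        = -(2*κ) * (1 - ‖x‖) ^ (2*κ - 1)
          + (1/2) * ((n : ℝ) - 1) * (1 - ‖x‖) ^ (2*κ) / ‖x‖ - 3*c)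
      ∧ (Afz κ (fC κ c) (-(4*c)) t x
        = 2*κ*(2*κ - 1)^2 * (1 - ‖x‖) ^ (2*κ - 3)
          - (1/2) * ((n : ℝ) - 1) * κ * (8*κ - 3) * (1 - ‖x‖) ^ (2*κ - 2) / ‖x‖
          + (1/2) * ((n : ℝ) - 1) * ((n : ℝ) - 4) * κ * (1 - ‖x‖) ^ (2*κ - 1) / ‖x‖^2
          + (1/4) * ((n : ℝ) - 1) * ((n : ℝ) - 3) * (1 - ‖x‖) ^ (2*κ) / ‖x‖^3) := by
  intro t x hx0 hx1
  have hκ0 : 1 + 2*κ ≠ 0 := by linarith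
  have hrne : ‖x‖ ≠ 0 := ne_of_gt hx0
  have hy : (0:ℝ) < 1 - ‖x‖ := by linarith
  have hyne : (1:ℝ) - ‖x‖ ≠ 0 := ne_of_gt hy
  constructor
  · rw [wfz_eq_psiW n κ c hκ0 t x hx0 hx1]
    simp only [psiW]
    ring
  · have hW : ∀ z ∈ {z : Spc n | 0 < ‖z‖ ∧ ‖z‖ < 1},
        wfz κ (fC κ c) (-(4*c)) 0 z = psiW n κ c ‖z‖ :=
      fun z hz => wfz_eq_psiW n κ c hκ0 0 z hz.1 hz.2
    have hlap : lap (wfz κ (fC κ c) (-(4*c))) t x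
        = d2psiW n κ ‖x‖ + ((n:ℝ)-1)/‖x‖ * dpsiW n κ ‖x‖ := by
      rw [lap_of_t_indep _ (fun z => wfz κ (fC κ c) (-(4*c)) 0 z)
        (fun s z => wfz_t_indep κ c (-(4*c)) s 0 z) t x]
      rw [lap_congr_on _ (fun z => psiW n κ c ‖z‖) _ isOpen_regionU hW t x ⟨hx0, hx1⟩]
      exact lap_radial (psiW n κ c) (dpsiW n κ) (d2psiW n κ)
        (fun s h0 h1 => hasDerivAt_psiW n κ c s h0 h1)
        (fun s h0 h1 => hasDerivAt_dpsiW n κ s h0 h1) t x hx0 hx1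
    have hpdr : pdr (wfz κ (fC κ c) (-(4*c))) t x = dpsiW n κ ‖x‖ := by
      rw [pdr_of_t_indep _ (fun z => wfz κ (fC κ c) (-(4*c)) 0 z)
        (fun s z => wfz_t_indep κ c (-(4*c)) s 0 z) t x]
      rw [pdr_congr_on _ (fun z => psiW n κ c ‖z‖) _ isOpen_regionU hW t x ⟨hx0, hx1⟩]
      exact pdr_radial (psiW n κ c) (dpsiW n κ ‖x‖) t x (norm_pos_iff.1 hx0)
        (hasDerivAt_psiW n κ c ‖x‖ hx0 hx1)
    have hwave : waveOp (wfz κ (fC κ c) (-(4*c))) t x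
        = lap (wfz κ (fC κ c) (-(4*c))) t x := by
      rw [waveOp, pdtpdt_wfz]
      ring
    rw [Afz, hwave, hlap, hpdr]
    simp only [d2psiW, dpsiW]
    have e1 : (1-‖x‖)^(2*κ) = (1-‖x‖)^(2*κ-1) * (1-‖x‖) := by
      rw [← Real.rpow_add_one hyne (2*κ-1)]
      norm_num
    have e2 : (1-‖x‖)^(2*κ-1) = (1-‖x‖)^(2*κ-2) * (1-‖x‖) := by
      rw [← Real.rpow_add_one hyne (2*κ-2)]
      congr 1
      ring
    have e3 : (1-‖x‖)^(2*κ-2) = (1-‖x‖)^(2*κ-3) * (1-‖x‖) := by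
      rw [← Real.rpow_add_one hyne (2*κ-3)]
      congr 1
      ring
    rw [e1, e2, e3]
    field_simp
    ring


end CarlemanWave
end
end
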